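/- Let H = (V,E) be a hypergraph of rank r and let h: E → [0,1] be a fractional matching. Form a random edge multiset L' by including Poisson(10·h(e)·log r) independent copies of each edge e (with r ≥ 2), and let L be obtained from L' by deleting all edges incident to any vertex whose degree in L' exceeds t = 20·log r. Then E[a(L)] ≥ c·a(h)·log r for an absolute constant c > 0, for any edge-weighting a. -/

import Mathlib

open scoped ENNReal BigOperators

/-- The Poisson probability mass function with rate `lam`. -/
noncomputable def poissonP (lam : ℝ) (n : ℕ) : ℝ :=
  Real.exp (-lam) * lam ^ n / (Nat.factorial n : ℝ)

lemma poissonP_nonneg {lam : ℝ} (hl : 0 ≤ lam) (n : ℕ) : 0 ≤ poissonP lam n := by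
  unfold poissonP; positivity

lemma tsum_pi_prod_fin (n : ℕ) (g : Fin n → ℕ → ℝ≥0∞) :
    ∑' x : Fin n → ℕ, ∏ i, g i (x i) = ∏ i, ∑' m, g i m := by
  induction n with
  | zero =>
      simp only [Finset.univ_eq_empty, Finset.prod_empty]
      exact tsum_eq_single default fun b hb => absurd (Subsingleton.elim b default) hb
  | succ n IH =>
      rw [← (Fin.consEquiv fun _ : Fin (n+1) => ℕ).tsum_eq fun x : Fin (n+1) → ℕ => ∏ i, g i (x i)]
      have h1 : ∀ p : ℕ × (Fin n → ℕ),
          (∏ i, g i ((Fin.consEquiv fun _ : Fin (n+1) => ℕ) p i))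
            = g 0 p.1 * ∏ i : Fin n, g i.succ (p.2 i) := by
        intro p
        rw [Fin.prod_univ_succ]
        simp [Fin.consEquiv, Fin.cons]
      simp_rw [h1]
      rw [ENNReal.tsum_prod (α := ℕ) (β := Fin n → ℕ)
        (f := fun m y => g 0 m * ∏ i : Fin n, g i.succ (y i))]
      simp_rw [ENNReal.tsum_mul_left]
      rw [ENNReal.tsum_mul_right, Fin.prod_univ_succ, IH fun i => g i.succ]

lemma tsum_pi_prod {ι : Type} [Fintype ι] (g : ι → ℕ → ℝ≥0∞) :
    ∑' x : ι → ℕ, ∏ i, g i (x i) = ∏ i, ∑' m, g i m := by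
  classical
  obtain ⟨e⟩ : Nonempty (ι ≃ Fin (Fintype.card ι)) := ⟨Fintype.equivFin ι⟩
  rw [← (Equiv.arrowCongr e (Equiv.refl ℕ)).symm.tsum_eq fun x : ι → ℕ => ∏ i, g i (x i)]
  have h1 : ∀ x : Fin (Fintype.card ι) → ℕ,
      (∏ i, g i ((Equiv.arrowCongr e (Equiv.refl ℕ)).symm x i))
        = ∏ j, g (e.symm j) (x j) := by
    intro x
    rw [← e.symm.prod_comp fun i => g i ((Equiv.arrowCongr e (Equiv.refl ℕ)).symm x i)]
    refine Finset.prod_congr rfl fun j _ => ?_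
    simp [Equiv.arrowCongr]
  simp_rw [h1]
  rw [tsum_pi_prod_fin _ fun j => g (e.symm j)]
  rw [← e.symm.prod_comp fun i => ∑' m, g i m]

lemma psum_summable (lam z : ℝ) :
    Summable (fun n => poissonP lam n * z ^ n) := by
  have hfun : (fun n => poissonP lam n * z ^ n)
      = fun n => Real.exp (-lam) * ((lam * z) ^ n / (n.factorial : ℝ)) := by
    funext n
    unfold poissonP
    rw [mul_pow]
    ring
  rw [hfun]
  exact (Real.summable_pow_div_factorial (lam * z)).mul_left _

lemma psum_tsum (lam z : ℝ) :
    ∑' n, poissonP lam n * z ^ n = Real.exp (lam * z - lam) := by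
  have hfun : (fun n : ℕ => poissonP lam n * z ^ n)
      = fun n => Real.exp (-lam) * ((lam * z) ^ n / (n.factorial : ℝ)) := by
    funext n
    unfold poissonP
    rw [mul_pow]
    ring
  rw [hfun, tsum_mul_left]
  have h2 : ∑' n : ℕ, ((lam * z) ^ n / (n.factorial : ℝ)) = Real.exp (lam * z) := by
    rw [Real.exp_eq_exp_ℝ, NormedSpace.exp_eq_tsum_div]
  rw [h2, ← Real.exp_add]
  ring_nf

lemma pnshift (lam z : ℝ) (n : ℕ) :
    (((n+1 : ℕ) : ℝ)) * (poissonP lam (n+1) * z ^ (n+1))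
      = (lam * z) * (poissonP lam n * z ^ n) := by
  unfold poissonP
  have h1 : ((n+1 : ℕ).factorial : ℝ) = ((n+1 : ℕ) : ℝ) * (n.factorial : ℝ) := by
    rw [Nat.factorial_succ]; push_cast; ring
  rw [h1]
  have h2 : ((n+1 : ℕ) : ℝ) ≠ 0 := by positivity
  have h3 : (n.factorial : ℝ) ≠ 0 := by positivity
  field_simp
  ring

lemma pnsum_summable (lam z : ℝ) :
    Summable (fun n : ℕ => (n : ℝ) * (poissonP lam n * z ^ n)) := by
  rw [← summable_nat_add_iff 1]
  have : (fun n : ℕ => ((n + 1 : ℕ) : ℝ) * (poissonP lam (n+1) * z ^ (n+1)))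
      = fun n => (lam * z) * (poissonP lam n * z ^ n) := by
    funext n; exact pnshift lam z n
  exact this ▸ (psum_summable lam z).mul_left _

lemma pnsum_tsum (lam z : ℝ) :
    ∑' n : ℕ, (n : ℝ) * (poissonP lam n * z ^ n)
      = lam * z * Real.exp (lam * z - lam) := by
  rw [(pnsum_summable lam z).tsum_eq_zero_add]
  push_cast
  simp only [Nat.cast_zero, zero_mul, zero_add]
  calc ∑' n : ℕ, ((n : ℝ) + 1) * (poissonP lam (n+1) * z ^ (n+1))
      = ∑' n : ℕ, (lam * z) * (poissonP lam n * z ^ n) := by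
        refine tsum_congr fun n => ?_
        have := pnshift lam z n
        push_cast at this
        exact this
    _ = lam * z * Real.exp (lam * z - lam) := by
        rw [tsum_mul_left, psum_tsum]

lemma Epsum (lam z : ℝ) (hl : 0 ≤ lam) (hz : 0 ≤ z) :
    ∑' n : ℕ, ENNReal.ofReal (poissonP lam n * z ^ n)
      = ENNReal.ofReal (Real.exp (lam * z - lam)) := by
  rw [← psum_tsum lam z]
  exact (ENNReal.ofReal_tsum_of_nonneg
    (fun n => mul_nonneg (poissonP_nonneg hl n) (pow_nonneg hz n))
    (psum_summable lam z)).symm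

lemma Epnsum (lam z : ℝ) (hl : 0 ≤ lam) (hz : 0 ≤ z) :
    ∑' n : ℕ, ENNReal.ofReal ((n : ℝ) * (poissonP lam n * z ^ n))
      = ENNReal.ofReal (lam * z * Real.exp (lam * z - lam)) := by
  rw [← pnsum_tsum lam z]
  exact (ENNReal.ofReal_tsum_of_nonneg
    (fun n => mul_nonneg (Nat.cast_nonneg n)
      (mul_nonneg (poissonP_nonneg hl n) (pow_nonneg hz n)))
    (pnsum_summable lam z)).symm

lemma mean_eval {ι : Type} [Fintype ι] [DecidableEq ι] (lam : ι → ℝ)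
    (hl : ∀ i, 0 ≤ lam i) (e : ι) :
    ∑' x : ι → ℕ, (∏ i, ENNReal.ofReal (poissonP (lam i) (x i)))
        * ENNReal.ofReal ((x e : ℕ) : ℝ)
      = ENNReal.ofReal (lam e) := by
  have key : ∀ x : ι → ℕ, (∏ i, ENNReal.ofReal (poissonP (lam i) (x i)))
      * ENNReal.ofReal ((x e : ℕ) : ℝ)
      = ∏ i, ENNReal.ofReal (poissonP (lam i) (x i)
          * (if i = e then ((x i : ℕ) : ℝ) else 1)) := by
    intro x
    rw [← ENNReal.ofReal_prod_of_nonneg (fun i _ => poissonP_nonneg (hl i) (x i)),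
      ← ENNReal.ofReal_prod_of_nonneg (fun i _ => mul_nonneg (poissonP_nonneg (hl i) (x i))
        (by split_ifs; exacts [Nat.cast_nonneg _, zero_le_one])),
      ← ENNReal.ofReal_mul (Finset.prod_nonneg fun i _ => poissonP_nonneg (hl i) (x i))]
    congr 1
    rw [Finset.prod_mul_distrib, Finset.prod_ite_eq' Finset.univ e
      (fun i => ((x i : ℕ) : ℝ)), if_pos (Finset.mem_univ e)]
  rw [tsum_congr key, tsum_pi_prod (fun i n => ENNReal.ofReal (poissonP (lam i) n
    * (if i = e then ((n : ℕ) : ℝ) else 1)))]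
  have key2 : ∀ i : ι, (∑' n : ℕ, ENNReal.ofReal (poissonP (lam i) n
      * (if i = e then ((n : ℕ) : ℝ) else 1)))
      = if i = e then ENNReal.ofReal (lam i) else 1 := by
    intro i
    by_cases hie : i = e
    · rw [if_pos hie]
      have : ∀ n : ℕ, poissonP (lam i) n * (if i = e then ((n : ℕ) : ℝ) else 1)
          = (n : ℝ) * (poissonP (lam i) n * (1:ℝ) ^ n) := by
        intro n; rw [if_pos hie, one_pow]; ring
      rw [tsum_congr fun n => congrArg ENNReal.ofReal (this n),
        Epnsum _ _ (hl i) zero_le_one]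
      norm_num
    · rw [if_neg hie]
      have : ∀ n : ℕ, poissonP (lam i) n * (if i = e then ((n : ℕ) : ℝ) else 1)
          = poissonP (lam i) n * (1:ℝ) ^ n := by
        intro n; rw [if_neg hie, one_pow]
      rw [tsum_congr fun n => congrArg ENNReal.ofReal (this n),
        Epsum _ _ (hl i) zero_le_one]
      norm_num
  rw [Finset.prod_congr rfl fun i _ => key2 i,
    Finset.prod_ite_eq' Finset.univ e (fun i => ENNReal.ofReal (lam i)),
    if_pos (Finset.mem_univ e)]

lemma chern_eval {ι : Type} [Fintype ι] [DecidableEq ι] (lam : ι → ℝ)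
    (hl : ∀ i, 0 ≤ lam i) (e : ι) (Fv : Finset ι) (he : e ∈ Fv) :
    ∑' x : ι → ℕ, (∏ i, ENNReal.ofReal (poissonP (lam i) (x i)))
        * ENNReal.ofReal ((x e : ℕ) : ℝ)
        * ENNReal.ofReal ((2:ℝ) ^ (∑ f ∈ Fv, x f))
      = ENNReal.ofReal (2 * lam e * Real.exp (∑ i ∈ Fv, lam i)) := by
  have key : ∀ x : ι → ℕ, (∏ i, ENNReal.ofReal (poissonP (lam i) (x i)))
      * ENNReal.ofReal ((x e : ℕ) : ℝ) * ENNReal.ofReal ((2:ℝ) ^ (∑ f ∈ Fv, x f))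
      = ∏ i, ENNReal.ofReal (poissonP (lam i) (x i)
          * (if i = e then ((x i : ℕ) : ℝ) else 1)
          * (if i ∈ Fv then (2:ℝ) ^ (x i) else 1)) := by
    intro x
    rw [← ENNReal.ofReal_prod_of_nonneg (fun i _ => poissonP_nonneg (hl i) (x i)),
      ← ENNReal.ofReal_prod_of_nonneg (fun i _ => mul_nonneg
        (mul_nonneg (poissonP_nonneg (hl i) (x i))
          (by split_ifs; exacts [Nat.cast_nonneg _, zero_le_one]))
        (by split_ifs; exacts [by positivity, zero_le_one])),
      ← ENNReal.ofReal_mul (Finset.prod_nonneg fun i _ => poissonP_nonneg (hl i) (x i)),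
      ← ENNReal.ofReal_mul (mul_nonneg
        (Finset.prod_nonneg fun i _ => poissonP_nonneg (hl i) (x i)) (Nat.cast_nonneg _))]
    congr 1
    rw [Finset.prod_mul_distrib, Finset.prod_mul_distrib,
      Finset.prod_ite_eq' Finset.univ e (fun i => ((x i : ℕ) : ℝ)),
      if_pos (Finset.mem_univ e)]
    congr 1
    rw [Finset.prod_ite_mem Finset.univ Fv (fun i => (2:ℝ) ^ (x i)), Finset.univ_inter,
      Finset.prod_pow_eq_pow_sum]
  rw [tsum_congr key, tsum_pi_prod (fun i n => ENNReal.ofReal (poissonP (lam i) n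
    * (if i = e then ((n : ℕ) : ℝ) else 1) * (if i ∈ Fv then (2:ℝ) ^ n else 1)))]
  have key2 : ∀ i : ι, (∑' n : ℕ, ENNReal.ofReal (poissonP (lam i) n
      * (if i = e then ((n : ℕ) : ℝ) else 1) * (if i ∈ Fv then (2:ℝ) ^ n else 1)))
      = if i = e then ENNReal.ofReal (2 * lam i * Real.exp (lam i))
        else if i ∈ Fv then ENNReal.ofReal (Real.exp (lam i)) else 1 := by
    intro i
    by_cases hie : i = e
    · rw [if_pos hie]
      have : ∀ n : ℕ, poissonP (lam i) n * (if i = e then ((n : ℕ) : ℝ) else 1)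
          * (if i ∈ Fv then (2:ℝ) ^ n else 1)
          = (n : ℝ) * (poissonP (lam i) n * (2:ℝ) ^ n) := by
        intro n; rw [if_pos hie, if_pos (hie ▸ he)]; ring
      rw [tsum_congr fun n => congrArg ENNReal.ofReal (this n),
        Epnsum _ _ (hl i) (by norm_num)]
      congr 1
      rw [show lam i * 2 - lam i = lam i by ring]
      ring
    · rw [if_neg hie]
      by_cases hif : i ∈ Fv
      · rw [if_pos hif]
        have : ∀ n : ℕ, poissonP (lam i) n * (if i = e then ((n : ℕ) : ℝ) else 1)
            * (if i ∈ Fv then (2:ℝ) ^ n else 1) = poissonP (lam i) n * (2:ℝ) ^ n := by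
          intro n; rw [if_neg hie, if_pos hif]; ring
        rw [tsum_congr fun n => congrArg ENNReal.ofReal (this n),
          Epsum _ _ (hl i) (by norm_num)]
        congr 1
        rw [show lam i * 2 - lam i = lam i by ring]
      · rw [if_neg hif]
        have : ∀ n : ℕ, poissonP (lam i) n * (if i = e then ((n : ℕ) : ℝ) else 1)
            * (if i ∈ Fv then (2:ℝ) ^ n else 1) = poissonP (lam i) n * (1:ℝ) ^ n := by
          intro n; rw [if_neg hie, if_neg hif, one_pow]; ring
        rw [tsum_congr fun n => congrArg ENNReal.ofReal (this n),
          Epsum _ _ (hl i) zero_le_one]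
        norm_num
  rw [Finset.prod_congr rfl fun i _ => key2 i]
  rw [← Finset.mul_prod_erase Finset.univ _ (Finset.mem_univ e), if_pos rfl]
  have key3 : ∀ i ∈ Finset.univ.erase e,
      (if i = e then ENNReal.ofReal (2 * lam i * Real.exp (lam i))
        else if i ∈ Fv then ENNReal.ofReal (Real.exp (lam i)) else 1)
      = ENNReal.ofReal (Real.exp (if i ∈ Fv then lam i else 0)) := by
    intro i hi
    rw [if_neg (Finset.mem_erase.1 hi).1]
    split_ifs with hif
    · rfl
    · rw [Real.exp_zero, ENNReal.ofReal_one]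
  rw [Finset.prod_congr rfl key3,
    ← ENNReal.ofReal_prod_of_nonneg (fun i _ => (Real.exp_pos _).le),
    ← Real.exp_sum, ← ENNReal.ofReal_mul (by have := hl e; positivity)]
  congr 1
  rw [mul_assoc, ← Real.exp_add]
  have h4 : ∑ i ∈ Finset.univ.erase e, (if i ∈ Fv then lam i else 0)
      = ∑ i ∈ Fv.erase e, lam i := by
    rw [Finset.sum_ite_mem]
    congr 1
    ext i
    simp [Finset.mem_erase, Finset.mem_inter, and_comm]
  rw [h4]
  exact congrArg (fun t => 2 * lam e * Real.exp t) (Finset.add_sum_erase Fv lam he)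

lemma final_conv {β : Type*} (G : β → ℝ) (F : β → ℝ) (hFG : ∀ x, G x = F x)
    (hF : ∀ x, 0 ≤ F x) (B : ℝ)
    (htop : ∑' x, ENNReal.ofReal (F x) ≠ ⊤)
    (hB : ENNReal.ofReal B ≤ ∑' x, ENNReal.ofReal (F x)) :
    B ≤ ∑' x, G x := by
  have hGF : G = F := funext hFG
  subst hGF
  have h1 : ∑' x, G x = (∑' x, ENNReal.ofReal (G x)).toReal := by
    rw [ENNReal.tsum_toReal_eq (fun x => ENNReal.ofReal_ne_top)]
    exact tsum_congr fun x => (ENNReal.toReal_ofReal (hF x)).symm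
  rw [h1]
  calc B ≤ (ENNReal.ofReal B).toReal := by
        rcases le_or_gt B 0 with hb | hb
        · exact le_trans hb ENNReal.toReal_nonneg
        · rw [ENNReal.toReal_ofReal hb.le]
    _ ≤ (∑' x, ENNReal.ofReal (G x)).toReal := ENNReal.toReal_mono htop hB

open scoped Classical in
/-- Poisson sampling of a fractional matching.  There is an absolute constant `c > 0` such
that for any rank-`r` hypergraph (`r ≥ 2`), fractional matching `h` and edge weights
`a ≥ 0`: if a random edge multiset `L'` includes `Poisson(10·h(e)·log r)` independent
copies of each edge `e`, and `L` is obtained by deleting all edges incident to a vertex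
whose degree in `L'` exceeds `t = 20·log r`, then `E[a(L)] ≥ c·a(h)·log r`. -/
theorem stmt14 : ∃ c : ℝ, 0 < c ∧
    ∀ (V : Type) [DecidableEq V], ∀ (E : Finset (Finset V)) (r : ℕ)
      (h a : Finset V → ℝ),
      2 ≤ r →
      (∀ e ∈ E, e.card ≤ r) →
      (∀ e ∈ E, 0 ≤ h e ∧ h e ≤ 1) →
      (∀ v : V, ∑ e ∈ E.filter (fun e => v ∈ e), h e ≤ 1) →
      (∀ e ∈ E, 0 ≤ a e) →
      c * (∑ e ∈ E, a e * h e) * Real.log r ≤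
        ∑' x : ({e // e ∈ E} → ℕ),
          (∏ e : {e // e ∈ E}, poissonP (10 * h e.1 * Real.log r) (x e)) *
            (∑ e ∈ E.attach, if (∀ v ∈ e.1,
                ((∑ f ∈ E.attach.filter (fun (f : {e // e ∈ E}) => v ∈ f.1), x f : ℕ) : ℝ)
                  ≤ 20 * Real.log r)
              then (x e : ℕ) * a e.1 else 0) := by
  refine ⟨1, one_pos, ?_⟩
  intro V instV E r h a hr hrank hh hdeg ha
  have hr0 : (0:ℝ) < (r:ℝ) := by
    have : (0:ℕ) < r := by omega
    exact_mod_cast this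
  have hr1 : (1:ℝ) < (r:ℝ) := by
    have : (1:ℕ) < r := by omega
    exact_mod_cast this
  have hL0 : 0 < Real.log r := Real.log_pos hr1
  set L := Real.log r with hLdef
  have hL2 : Real.log 2 ≤ L := by
    rw [hLdef]
    apply Real.log_le_log (by norm_num)
    exact_mod_cast hr
  set lam : {e // e ∈ E} → ℝ := fun i => 10 * h i.1 * L with hlamdef
  have hlam0 : ∀ i : {e // e ∈ E}, 0 ≤ lam i := by
    intro i
    have := (hh i.1 i.2).1
    have := hL0.le
    rw [hlamdef]
    positivity
  have hlamsum : ∀ v : V,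
      (∑ f ∈ E.attach.filter (fun f : {e // e ∈ E} => v ∈ f.1), lam f) ≤ 10 * L := by
    intro v
    have h1 : ∑ f ∈ E.attach.filter (fun f : {e // e ∈ E} => v ∈ f.1), h f.1
        = ∑ e ∈ E.filter (fun e => v ∈ e), h e := by
      rw [Finset.sum_filter, Finset.sum_filter]
      exact Finset.sum_attach E (fun e => if v ∈ e then h e else 0)
    have h2 : ∑ f ∈ E.attach.filter (fun f : {e // e ∈ E} => v ∈ f.1), lam f
        = (10 * L) * ∑ f ∈ E.attach.filter (fun f : {e // e ∈ E} => v ∈ f.1), h f.1 := by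
      rw [Finset.mul_sum]
      refine Finset.sum_congr rfl fun f _ => ?_
      rw [hlamdef]; ring
    rw [h2, h1]
    have h3 := hdeg v
    nlinarith [hL0]
  -- the real integrand (our private copy)
  set F : ({e // e ∈ E} → ℕ) → ℝ := fun x =>
    (∏ i : {e // e ∈ E}, poissonP (lam i) (x i)) *
      (∑ e ∈ E.attach, if (∀ v ∈ e.1,
          ((∑ f ∈ E.attach.filter (fun (f : {e // e ∈ E}) => v ∈ f.1), x f : ℕ) : ℝ)
            ≤ 20 * L)
        then ((x e : ℕ) : ℝ) * a e.1 else 0) with hFdef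
  -- ENNReal machinery
  set Q : {e // e ∈ E} → ℕ → ℝ≥0∞ := fun i n => ENNReal.ofReal (poissonP (lam i) n)
    with hQdef
  set P : ({e // e ∈ E} → ℕ) → ℝ≥0∞ := fun x => ∏ i, Q i (x i) with hPdef
  set C : {e // e ∈ E} → ({e // e ∈ E} → ℕ) → Prop := fun e x => ∀ v ∈ e.1,
      ((∑ f ∈ E.attach.filter (fun f : {e // e ∈ E} => v ∈ f.1), x f : ℕ) : ℝ) ≤ 20 * L
    with hCdef
  set T : {e // e ∈ E} → ℝ≥0∞ := fun e =>
      ∑' x, P x * (if C e x then ENNReal.ofReal ((x e : ℕ) : ℝ) else 0) with hTdef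
  set Bad : {e // e ∈ E} → ℝ≥0∞ := fun e =>
      ∑' x, P x * (if C e x then 0 else ENNReal.ofReal ((x e : ℕ) : ℝ)) with hBaddef
  have hFpos : ∀ x, 0 ≤ F x := by
    intro x
    rw [hFdef]
    refine mul_nonneg (Finset.prod_nonneg fun i _ => poissonP_nonneg (hlam0 i) (x i)) ?_
    refine Finset.sum_nonneg fun e he => ?_
    split_ifs
    · exact mul_nonneg (Nat.cast_nonneg _) (ha e.1 e.2)
    · exact le_rfl
  have hofF : ∀ x, ENNReal.ofReal (F x) = ∑ e ∈ E.attach,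
      ENNReal.ofReal (a e.1) * (P x * (if C e x then ENNReal.ofReal ((x e : ℕ) : ℝ) else 0)) := by
    intro x
    have h1 : ENNReal.ofReal (F x) = P x * ENNReal.ofReal (∑ e ∈ E.attach, if C e x
        then ((x e : ℕ) : ℝ) * a e.1 else 0) := by
      rw [hFdef, ENNReal.ofReal_mul
        (Finset.prod_nonneg fun i _ => poissonP_nonneg (hlam0 i) (x i)),
        ENNReal.ofReal_prod_of_nonneg (fun i _ => poissonP_nonneg (hlam0 i) (x i))]
    rw [h1, ENNReal.ofReal_sum_of_nonneg (fun e he => by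
      split_ifs
      · exact mul_nonneg (Nat.cast_nonneg _) (ha e.1 e.2)
      · exact le_rfl), Finset.mul_sum]
    refine Finset.sum_congr rfl fun e he => ?_
    by_cases hc : C e x
    · rw [if_pos hc, if_pos hc, ENNReal.ofReal_mul (Nat.cast_nonneg _)]
      ring
    · rw [if_neg hc, if_neg hc]
      simp
  have hswap : ∑' x, ENNReal.ofReal (F x)
      = ∑ e ∈ E.attach, ENNReal.ofReal (a e.1) * T e := by
    rw [tsum_congr hofF, Summable.tsum_finsetSum (fun e _ => ENNReal.summable)]
    exact Finset.sum_congr rfl fun e _ => ENNReal.tsum_mul_left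
  have hmean : ∀ e : {e // e ∈ E},
      (∑' x : {e // e ∈ E} → ℕ, P x * ENNReal.ofReal ((x e : ℕ) : ℝ))
        = ENNReal.ofReal (lam e) := fun e => mean_eval lam hlam0 e
  have hTle : ∀ e, T e ≤ ENNReal.ofReal (lam e) := by
    intro e
    rw [← hmean e, hTdef]
    refine ENNReal.tsum_le_tsum fun x => ?_
    by_cases hc : C e x
    · rw [if_pos hc]
    · rw [if_neg hc]
      simp
  have hsplit : ∀ e, T e + Bad e = ENNReal.ofReal (lam e) := by
    intro e
    rw [hTdef, hBaddef, ← ENNReal.tsum_add, ← hmean e]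
    refine tsum_congr fun x => ?_
    by_cases hc : C e x
    · rw [if_pos hc, if_pos hc, mul_zero, add_zero]
    · rw [if_neg hc, if_neg hc, mul_zero, zero_add]
  have hnum : (r:ℝ) * (Real.exp (-(20*L*Real.log 2)) * (2 * Real.exp (10*L))) ≤ 1/2 := by
    have hrL : (r:ℝ) = Real.exp L := (Real.exp_log hr0).symm
    have hexp14 : Real.exp (-(2*Real.log 2)) = 1/4 := by
      rw [show -(2*Real.log 2) = -(Real.log 2) + -(Real.log 2) by ring, Real.exp_add,
        Real.exp_neg, Real.exp_log (by norm_num : (0:ℝ) < 2)]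
      norm_num
    have hlog2 := Real.log_two_gt_d9
    have harg : L + -(20*L*Real.log 2) + 10*L ≤ -(2*Real.log 2) := by
      nlinarith [mul_nonneg (by nlinarith : (0:ℝ) ≤ 20*Real.log 2 - 11)
        (by linarith : (0:ℝ) ≤ L - Real.log 2)]
    calc (r:ℝ) * (Real.exp (-(20*L*Real.log 2)) * (2 * Real.exp (10*L)))
        = 2 * Real.exp (L + -(20*L*Real.log 2) + 10*L) := by
          rw [hrL, Real.exp_add, Real.exp_add]; ring
      _ ≤ 2 * Real.exp (-(2*Real.log 2)) := by
          have := Real.exp_le_exp.2 harg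
          linarith
      _ = 1/2 := by rw [hexp14]; norm_num
  have hBadle : ∀ e, Bad e ≤ ENNReal.ofReal (lam e * (1/2)) := by
    intro e
    have step1 : Bad e ≤ ∑ v ∈ e.1, ∑' x, P x * ENNReal.ofReal ((x e : ℕ) : ℝ)
        * (if ((∑ f ∈ E.attach.filter (fun f : {e // e ∈ E} => v ∈ f.1), x f : ℕ) : ℝ)
            ≤ 20*L then 0 else 1) := by
      rw [hBaddef, ← Summable.tsum_finsetSum (fun v _ => ENNReal.summable)]
      refine ENNReal.tsum_le_tsum fun x => ?_
      by_cases hc : C e x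
      · rw [if_pos hc]
        simp
      · rw [if_neg hc]
        have hc2 : ¬ ∀ v ∈ e.1, ((∑ f ∈ E.attach.filter
            (fun f : {e // e ∈ E} => v ∈ f.1), x f : ℕ) : ℝ) ≤ 20 * L := hc
        push_neg at hc2
        obtain ⟨v, hv, hvt⟩ := hc2
        have heq : P x * ENNReal.ofReal ((x e : ℕ) : ℝ)
            = P x * ENNReal.ofReal ((x e : ℕ) : ℝ)
              * (if ((∑ f ∈ E.attach.filter (fun f : {e // e ∈ E} => v ∈ f.1), x f : ℕ) : ℝ)
                  ≤ 20*L then 0 else 1) := by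
          rw [if_neg (not_le.2 hvt), mul_one]
        refine le_trans (le_of_eq heq) ?_
        exact Finset.single_le_sum (f := fun v => P x * ENNReal.ofReal ((x e : ℕ) : ℝ)
          * (if ((∑ f ∈ E.attach.filter (fun f : {e // e ∈ E} => v ∈ f.1), x f : ℕ) : ℝ)
              ≤ 20*L then 0 else 1)) (fun v _ => zero_le) hv
    have step2 : ∀ v ∈ e.1, (∑' x : {e // e ∈ E} → ℕ, P x * ENNReal.ofReal ((x e : ℕ) : ℝ)
        * (if ((∑ f ∈ E.attach.filter (fun f : {e // e ∈ E} => v ∈ f.1), x f : ℕ) : ℝ)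
            ≤ 20*L then 0 else 1))
        ≤ ENNReal.ofReal (Real.exp (-(20*L*Real.log 2)) * (2 * lam e * Real.exp (10*L))) := by
      intro v hv
      have hFvmem : e ∈ E.attach.filter (fun f : {e // e ∈ E} => v ∈ f.1) :=
        Finset.mem_filter.2 ⟨Finset.mem_attach E e, hv⟩
      have pt : ∀ x : {e // e ∈ E} → ℕ, P x * ENNReal.ofReal ((x e : ℕ) : ℝ)
          * (if ((∑ f ∈ E.attach.filter (fun f : {e // e ∈ E} => v ∈ f.1), x f : ℕ) : ℝ)
              ≤ 20*L then 0 else 1)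
          ≤ ENNReal.ofReal (Real.exp (-(20*L*Real.log 2)))
            * (P x * ENNReal.ofReal ((x e : ℕ) : ℝ)
              * ENNReal.ofReal ((2:ℝ) ^ (∑ f ∈ E.attach.filter
                  (fun f : {e // e ∈ E} => v ∈ f.1), x f))) := by
        intro x
        set D : ℕ := ∑ f ∈ E.attach.filter (fun f : {e // e ∈ E} => v ∈ f.1), x f with hD
        by_cases hd : ((D : ℕ) : ℝ) ≤ 20*L
        · rw [if_pos hd, mul_zero]
          exact zero_le
        · rw [if_neg hd, mul_one]
          have h2D : (1:ℝ≥0∞) ≤ ENNReal.ofReal (Real.exp (-(20*L*Real.log 2)))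
              * ENNReal.ofReal ((2:ℝ) ^ D) := by
            rw [← ENNReal.ofReal_mul (Real.exp_pos _).le, ENNReal.one_le_ofReal]
            have hDge : 20*L ≤ ((D : ℕ) : ℝ) := (not_le.1 hd).le
            have h2exp : ((2:ℝ)) ^ D = Real.exp (((D : ℕ) : ℝ) * Real.log 2) := by
              rw [Real.exp_nat_mul, Real.exp_log (by norm_num : (0:ℝ) < 2)]
            rw [h2exp, ← Real.exp_add,
              show -(20*L*Real.log 2) + ((D : ℕ) : ℝ)*Real.log 2
                = (((D : ℕ) : ℝ) - 20*L)*Real.log 2 by ring]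
            calc (1:ℝ) = Real.exp 0 := Real.exp_zero.symm
              _ ≤ _ := Real.exp_le_exp.2 (mul_nonneg (by linarith)
                  (Real.log_nonneg one_le_two))
          calc P x * ENNReal.ofReal ((x e : ℕ) : ℝ)
              = 1 * (P x * ENNReal.ofReal ((x e : ℕ) : ℝ)) := (one_mul _).symm
            _ ≤ (ENNReal.ofReal (Real.exp (-(20*L*Real.log 2)))
                  * ENNReal.ofReal ((2:ℝ) ^ D))
                * (P x * ENNReal.ofReal ((x e : ℕ) : ℝ)) := mul_le_mul_left h2D _
            _ = ENNReal.ofReal (Real.exp (-(20*L*Real.log 2)))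
                * (P x * ENNReal.ofReal ((x e : ℕ) : ℝ) * ENNReal.ofReal ((2:ℝ) ^ D)) := by
                ring
      calc (∑' x : {e // e ∈ E} → ℕ, P x * ENNReal.ofReal ((x e : ℕ) : ℝ)
          * (if ((∑ f ∈ E.attach.filter (fun f : {e // e ∈ E} => v ∈ f.1), x f : ℕ) : ℝ)
              ≤ 20*L then 0 else 1))
          ≤ ∑' x : {e // e ∈ E} → ℕ, ENNReal.ofReal (Real.exp (-(20*L*Real.log 2)))
            * (P x * ENNReal.ofReal ((x e : ℕ) : ℝ)
              * ENNReal.ofReal ((2:ℝ) ^ (∑ f ∈ E.attach.filter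
                  (fun f : {e // e ∈ E} => v ∈ f.1), x f))) := ENNReal.tsum_le_tsum pt
        _ = ENNReal.ofReal (Real.exp (-(20*L*Real.log 2)))
            * ∑' x : {e // e ∈ E} → ℕ, (P x * ENNReal.ofReal ((x e : ℕ) : ℝ)
              * ENNReal.ofReal ((2:ℝ) ^ (∑ f ∈ E.attach.filter
                  (fun f : {e // e ∈ E} => v ∈ f.1), x f))) := ENNReal.tsum_mul_left
        _ = ENNReal.ofReal (Real.exp (-(20*L*Real.log 2)))
            * ENNReal.ofReal (2 * lam e * Real.exp (∑ f ∈ E.attach.filter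
                (fun f : {e // e ∈ E} => v ∈ f.1), lam f)) := by
            rw [chern_eval lam hlam0 e _ hFvmem]
        _ ≤ ENNReal.ofReal (Real.exp (-(20*L*Real.log 2)))
            * ENNReal.ofReal (2 * lam e * Real.exp (10*L)) := by
            refine mul_le_mul_right (ENNReal.ofReal_le_ofReal ?_) _
            refine mul_le_mul_of_nonneg_left ?_ (by have := hlam0 e; positivity)
            exact Real.exp_le_exp.2 (hlamsum v)
        _ = ENNReal.ofReal (Real.exp (-(20*L*Real.log 2)) * (2 * lam e * Real.exp (10*L))) :=
            (ENNReal.ofReal_mul (Real.exp_pos _).le).symm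
    have hcardle : (e.1.card : ℝ≥0∞) ≤ (r : ℝ≥0∞) := by
      exact_mod_cast Nat.cast_le.2 (hrank e.1 e.2)
    calc Bad e ≤ ∑ v ∈ e.1, ∑' x, P x * ENNReal.ofReal ((x e : ℕ) : ℝ)
          * (if ((∑ f ∈ E.attach.filter (fun f : {e // e ∈ E} => v ∈ f.1), x f : ℕ) : ℝ)
              ≤ 20*L then 0 else 1) := step1
      _ ≤ ∑ v ∈ e.1, ENNReal.ofReal (Real.exp (-(20*L*Real.log 2))
            * (2 * lam e * Real.exp (10*L))) := Finset.sum_le_sum step2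
      _ = (e.1.card : ℝ≥0∞) * ENNReal.ofReal (Real.exp (-(20*L*Real.log 2))
            * (2 * lam e * Real.exp (10*L))) := by
          rw [Finset.sum_const, nsmul_eq_mul]
      _ ≤ (r : ℝ≥0∞) * ENNReal.ofReal (Real.exp (-(20*L*Real.log 2))
            * (2 * lam e * Real.exp (10*L))) := mul_le_mul_left hcardle _
      _ = ENNReal.ofReal ((r:ℝ) * (Real.exp (-(20*L*Real.log 2))
            * (2 * lam e * Real.exp (10*L)))) := by
          rw [← ENNReal.ofReal_natCast r, ← ENNReal.ofReal_mul (Nat.cast_nonneg r)]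
      _ ≤ ENNReal.ofReal (lam e * (1/2)) := by
          refine ENNReal.ofReal_le_ofReal ?_
          have hle : (r:ℝ) * (Real.exp (-(20*L*Real.log 2)) * (2 * lam e * Real.exp (10*L)))
              = lam e * ((r:ℝ) * (Real.exp (-(20*L*Real.log 2)) * (2 * Real.exp (10*L)))) := by
            ring
          rw [hle]
          exact mul_le_mul_of_nonneg_left hnum (hlam0 e)
  have hThalf : ∀ e, ENNReal.ofReal (lam e * (1/2)) ≤ T e := by
    intro e
    have h1 : ENNReal.ofReal (lam e) - Bad e ≤ T e :=
      tsub_le_iff_right.2 (le_of_eq (hsplit e).symm)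
    have h2 : ENNReal.ofReal (lam e * (1/2))
        = ENNReal.ofReal (lam e) - ENNReal.ofReal (lam e * (1/2)) := by
      rw [← ENNReal.ofReal_sub _ (mul_nonneg (hlam0 e) (by norm_num))]
      congr 1
      ring
    calc ENNReal.ofReal (lam e * (1/2))
        = ENNReal.ofReal (lam e) - ENNReal.ofReal (lam e * (1/2)) := h2
      _ ≤ ENNReal.ofReal (lam e) - Bad e := tsub_le_tsub_left (hBadle e) _
      _ ≤ T e := h1
  have htop : ∑' x, ENNReal.ofReal (F x) ≠ ⊤ := by
    rw [hswap]
    refine (ENNReal.sum_lt_top.2 fun e _ => ?_).ne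
    exact ENNReal.mul_lt_top ENNReal.ofReal_lt_top
      (lt_of_le_of_lt (hTle e) ENNReal.ofReal_lt_top)
  have hS0 : 0 ≤ ∑ e ∈ E, a e * h e :=
    Finset.sum_nonneg fun e he => mul_nonneg (ha e he) (hh e he).1
  have hB : ENNReal.ofReal (1 * (∑ e ∈ E, a e * h e) * L)
      ≤ ∑' x, ENNReal.ofReal (F x) := by
    rw [hswap]
    have hreal : 1 * (∑ e ∈ E, a e * h e) * L
        ≤ ∑ e ∈ E.attach, a e.1 * (lam e * (1/2)) := by
      have h1 : ∑ e ∈ E.attach, a e.1 * (lam e * (1/2))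
          = 5 * L * ∑ e ∈ E.attach, a e.1 * h e.1 := by
        rw [Finset.mul_sum]
        refine Finset.sum_congr rfl fun e _ => ?_
        rw [hlamdef]
        ring
      have h2 : ∑ e ∈ E.attach, a e.1 * h e.1 = ∑ e ∈ E, a e * h e :=
        Finset.sum_attach E (fun e => a e * h e)
      rw [h1, h2]
      nlinarith [hS0, hL0]
    calc ENNReal.ofReal (1 * (∑ e ∈ E, a e * h e) * L)
        ≤ ENNReal.ofReal (∑ e ∈ E.attach, a e.1 * (lam e * (1/2))) :=
          ENNReal.ofReal_le_ofReal hreal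
      _ = ∑ e ∈ E.attach, ENNReal.ofReal (a e.1 * (lam e * (1/2))) :=
          ENNReal.ofReal_sum_of_nonneg fun e he =>
            mul_nonneg (ha e.1 e.2) (mul_nonneg (hlam0 e) (by norm_num))
      _ = ∑ e ∈ E.attach, ENNReal.ofReal (a e.1) * ENNReal.ofReal (lam e * (1/2)) :=
          Finset.sum_congr rfl fun e _ => ENNReal.ofReal_mul (ha e.1 e.2)
      _ ≤ ∑ e ∈ E.attach, ENNReal.ofReal (a e.1) * T e :=
          Finset.sum_le_sum fun e _ => mul_le_mul_right (hThalf e) _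
  exact final_conv _ F (fun x => rfl) hFpos _ htop hB
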